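/- Optimal value of the finetuning objective under the fixed-distance assumption: If ζ is exchangeable and has fixed distance n, then the supremum over λ ∈ ℝ^k with Σ_i λ_i² ≤ R² of F(λ) equals R·√(n/k), and it is attained at the uniform vector λ* with λ*_i = R/√k for all i. (Hence in the linear case study the optimal averaged supervised loss equals −B·R·√(n_k/k_C), as used in Lemmas D.3 and D.4.) -/
import Mathlib


open scoped BigOperators

/-- Objective `F(λ) = Σ_{(z,z')} ζ(z,z')·√(Σ_i λ_i²·1[z_i ≠ z'_i])`, where points of
`{−1,+1}^k` are encoded as `Fin k → Bool`. -/
noncomputable def F {k : ℕ} (ζ : ((Fin k → Bool) × (Fin k → Bool)) → ℝ)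
    (lam : Fin k → ℝ) : ℝ :=
  ∑ p : (Fin k → Bool) × (Fin k → Bool),
    ζ p * Real.sqrt (∑ i, (lam i) ^ 2 * (if p.1 i ≠ p.2 i then 1 else 0))

/-- `ζ` is exchangeable: invariant under simultaneous coordinate permutations. -/
def Exchangeable {k : ℕ} (ζ : ((Fin k → Bool) × (Fin k → Bool)) → ℝ) : Prop :=
  ∀ σ : Equiv.Perm (Fin k), ∀ p : (Fin k → Bool) × (Fin k → Bool),
    ζ (p.1 ∘ σ, p.2 ∘ σ) = ζ p

/-- `ζ` has fixed distance `n`: `ζ`-almost surely `z` and `z'` differ in exactly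
`n` coordinates. -/
def FixedDistance {k : ℕ} (ζ : ((Fin k → Bool) × (Fin k → Bool)) → ℝ) (n : ℕ) : Prop :=
  ∀ p : (Fin k → Bool) × (Fin k → Bool), ζ p ≠ 0 →
    (Finset.univ.filter fun i => p.1 i ≠ p.2 i).card = n

/-- Optimal value of the finetuning objective under the fixed-distance assumption:
the supremum of `F` over the ball of radius `R` equals `R·√(n/k)` and is attained
at the uniform vector `λ*_i = R/√k`. -/
theorem optimal_value_fixed_distance
    (k : ℕ) (hk : 1 ≤ k) (R : ℝ) (hR : 0 ≤ R)
    (ζ : ((Fin k → Bool) × (Fin k → Bool)) → ℝ)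
    (hζ0 : ∀ p, 0 ≤ ζ p) (hζ1 : ∑ p, ζ p = 1)
    (hex : Exchangeable ζ)
    (n : ℕ) (hn1 : 1 ≤ n) (hnk : n ≤ k) (hfd : FixedDistance ζ n) :
    F ζ (fun _ => R / Real.sqrt k) = R * Real.sqrt ((n : ℝ) / k) ∧
      ∀ lam : Fin k → ℝ, (∑ i, (lam i) ^ 2) ≤ R ^ 2 →
        F ζ lam ≤ R * Real.sqrt ((n : ℝ) / k) := by
  have hkpos : (0:ℝ) < k := by positivity
  -- indicator sum = card
  have hcard : ∀ p : (Fin k → Bool) × (Fin k → Bool),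
      (∑ i, (if p.1 i ≠ p.2 i then (1:ℝ) else 0)) =
        ((Finset.univ.filter fun i => p.1 i ≠ p.2 i).card : ℝ) := by
    intro p
    rw [Finset.sum_boole]
  constructor
  · -- value at uniform vector
    have : ∀ p : (Fin k → Bool) × (Fin k → Bool),
        ζ p * Real.sqrt (∑ i, ((R / Real.sqrt k)) ^ 2 * (if p.1 i ≠ p.2 i then 1 else 0))
          = ζ p * (R * Real.sqrt ((n : ℝ) / k)) := by
      intro p
      by_cases hp : ζ p = 0
      · simp [hp]
      · have hc := hfd p hp
        have hs : (∑ i, ((R / Real.sqrt k)) ^ 2 * (if p.1 i ≠ p.2 i then (1:ℝ) else 0))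
            = R ^ 2 * ((n : ℝ) / k) := by
          rw [← Finset.mul_sum, hcard p, hc]
          rw [div_pow, Real.sq_sqrt (le_of_lt hkpos)]
          ring
        rw [hs, Real.sqrt_mul (sq_nonneg R), Real.sqrt_sq hR]
    rw [F]
    rw [Finset.sum_congr rfl (fun p _ => this p), ← Finset.sum_mul, hζ1, one_mul]
  · -- upper bound
    intro lam hlam
    set s : ((Fin k → Bool) × (Fin k → Bool)) → ℝ :=
      fun p => ∑ i, (lam i) ^ 2 * (if p.1 i ≠ p.2 i then 1 else 0) with hs_def
    have hs0 : ∀ p, 0 ≤ s p := fun p =>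
      Finset.sum_nonneg fun i _ => by positivity
    -- weights
    set w : Fin k → ℝ := fun i => ∑ p : (Fin k → Bool) × (Fin k → Bool),
      ζ p * (if p.1 i ≠ p.2 i then 1 else 0) with hw_def
    -- w constant by exchangeability
    have hwconst : ∀ i j : Fin k, w i = w j := by
      intro i j
      have hz := fun p => hex (Equiv.swap i j) p
      apply Fintype.sum_equiv
        (Equiv.prodCongr (Equiv.arrowCongr (Equiv.swap i j) (Equiv.refl Bool))
          (Equiv.arrowCongr (Equiv.swap i j) (Equiv.refl Bool)))
      intro p
      have hEp : (Equiv.prodCongr (Equiv.arrowCongr (Equiv.swap i j) (Equiv.refl Bool))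
          (Equiv.arrowCongr (Equiv.swap i j) (Equiv.refl Bool))) p
          = (p.1 ∘ Equiv.swap i j, p.2 ∘ Equiv.swap i j) := by
        ext x <;> simp [Equiv.arrowCongr, Equiv.symm_swap]
      rw [hEp, hz p]
      simp [Equiv.swap_apply_left]
    -- sum of w = n
    have hwsum : (∑ i, w i) = (n : ℝ) := by
      rw [hw_def]
      rw [Finset.sum_comm]
      have : ∀ p : (Fin k → Bool) × (Fin k → Bool),
          (∑ i, ζ p * (if p.1 i ≠ p.2 i then (1:ℝ) else 0)) = ζ p * n := by
        intro p
        by_cases hp : ζ p = 0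
        · simp [hp]
        · rw [← Finset.mul_sum, hcard p, hfd p hp]
      rw [Finset.sum_congr rfl (fun p _ => this p), ← Finset.sum_mul, hζ1, one_mul]
    -- each w i = n / k
    obtain ⟨i0⟩ : Nonempty (Fin k) := ⟨⟨0, hk⟩⟩
    have hwval : ∀ i, w i = (n : ℝ) / k := by
      intro i
      have : (∑ j, w j) = (k : ℝ) * w i := by
        rw [Finset.sum_congr rfl (fun j _ => hwconst j i)]
        simp [mul_comm]
      have hkw : (k : ℝ) * w i = n := by rw [← this, hwsum]
      field_simp at hkw ⊢
      linarith
    -- expectation of s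
    have hS : (∑ p, ζ p * s p) = ((n : ℝ) / k) * ∑ i, (lam i) ^ 2 := by
      have : (∑ p, ζ p * s p) = ∑ i, (lam i) ^ 2 * w i := by
        rw [hw_def]
        simp only [hs_def, Finset.mul_sum]
        rw [Finset.sum_comm]
        exact Finset.sum_congr rfl fun i _ => Finset.sum_congr rfl fun p _ => by ring
      rw [this, Finset.sum_congr rfl (fun i _ => by rw [hwval i]), ← Finset.sum_mul]
      ring
    have hSle : (∑ p, ζ p * s p) ≤ ((n : ℝ) / k) * R ^ 2 := by
      rw [hS]
      apply mul_le_mul_of_nonneg_left hlam (by positivity)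
    -- Cauchy-Schwarz / Jensen
    have hF : F ζ lam = ∑ p, Real.sqrt (ζ p) * Real.sqrt (ζ p * s p) := by
      rw [F]
      apply Finset.sum_congr rfl
      intro p _
      rw [Real.sqrt_mul (hζ0 p), ← mul_assoc, Real.mul_self_sqrt (hζ0 p)]
    have hCS := Real.sum_sqrt_mul_sqrt_le (Finset.univ)
      (f := ζ) (g := fun p => ζ p * s p) hζ0
      (fun p => mul_nonneg (hζ0 p) (hs0 p))
    rw [hζ1, Real.sqrt_one, one_mul] at hCS
    calc F ζ lam ≤ Real.sqrt (∑ p, ζ p * s p) := by rw [hF]; exact hCS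
      _ ≤ Real.sqrt (((n : ℝ) / k) * R ^ 2) := Real.sqrt_le_sqrt hSle
      _ = R * Real.sqrt ((n : ℝ) / k) := by
          rw [Real.sqrt_mul (by positivity), Real.sqrt_sq hR]; ring
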